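/- For n ≥ 2, r ≥ 1 and every 1 ≤ t ≤ n^r: b(t) = N_r(2^r − N*(t)), where b(t) is the maximum of |B(F)| over all F ⊆ [n]^r with |F| = t, and N*(t) is the unique q with N_r(q−1) < t ≤ N_r(q). -/

import Mathlib

/-- Whether the `j`-th coordinate of the edge `e` equals the distinguished vertex
(the first vertex of its side, representing `v_{j+1} = 1`). -/
def vcond {n r : ℕ} (e : Fin r → Fin n) (j : ℕ) : Bool :=
  if h : j < r then decide ((e ⟨j, h⟩ : ℕ) = 0) else false

/-- The nested condition `v_{j+1} ∈ e σ₁ (v_{j+2} ∈ e σ₂ (⋯))` determined by a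
sequence `σ` over `{∧, ∨}` (where `false` encodes `∧` and `true` encodes `∨`). -/
def edgeCond {n r : ℕ} (e : Fin r → Fin n) : ℕ → List Bool → Bool
  | j, [] => vcond e j
  | j, false :: s => vcond e j && edgeCond e (j + 1) s
  | j, true :: s => vcond e j || edgeCond e (j + 1) s

/-- `F_r(σ)`: the set of edges of `[n]^r` satisfying the nested condition given by `σ`. -/
def Fset (n r : ℕ) (σ : List Bool) : Finset (Fin r → Fin n) :=
  Finset.univ.filter (fun e => edgeCond e 0 σ = true)

/-- `f_r(σ) = |F_r(σ)|`. -/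
def fval (n r : ℕ) (σ : List Bool) : ℕ := (Fset n r σ).card

/-- `Ψ_r`: the sequences over `{∧, ∨}` of length at most `r - 1`. -/
def PsiSet (r : ℕ) : Finset (List Bool) :=
  (Finset.range r).biUnion (fun m => (Finset.univ : Finset (Fin m → Bool)).image List.ofFn)

/-- The set of values `{f_r(σ) : σ ∈ Σ_r}`, where `f_r(α) = 0` and `f_r(ω) = n ^ r`. -/
def Nvals (n r : ℕ) : Finset ℕ :=
  insert 0 (insert (n ^ r) ((PsiSet r).image (fval n r)))

/-- `N_r(i)`: the `(i+1)`-st smallest element of `{f_r(σ) : σ ∈ Σ_r}`. -/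
def Nseq (n r i : ℕ) : ℕ := ((Nvals n r).sort (· ≤ ·)).getD i 0

/-- The blocker `B(F)`: edges of `[n]^r` meeting every edge of `F`. -/
def blocker (n r : ℕ) (F : Finset (Fin r → Fin n)) : Finset (Fin r → Fin n) :=
  Finset.univ.filter (fun e => ∀ f ∈ F, ∃ i, e i = f i)


def Nf (n : ℕ) : ℕ → ℕ → ℕ
  | 0, i => min i 1
  | (k+1), i => if i ≤ 2^k then Nf n k i else n^k + (n-1) * Nf n k (i - 2^k)

lemma Nf_zero (n k : ℕ) : Nf n k 0 = 0 := by
  induction k with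
  | zero => simp [Nf]
  | succ k ih => simp [Nf, ih, Nat.pow_pos]

lemma Nf_low (n k i : ℕ) (h : i ≤ 2^k) : Nf n (k+1) i = Nf n k i := by
  simp [Nf, h]

lemma Nf_top (n k : ℕ) (hn : 1 ≤ n) : Nf n k (2^k) = n^k := by
  induction k with
  | zero => simp [Nf]
  | succ k ih =>
    have h : ¬ (2^(k+1) ≤ 2^k) := by
      simp [pow_succ]
    simp only [Nf, if_neg h]
    have : 2^(k+1) - 2^k = 2^k := by simp [pow_succ]; omega
    rw [this, ih]
    have hn2 : n^(k+1) = n^k + (n-1) * n^k := by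
      have h1 : n = 1 + (n-1) := by omega
      calc n^(k+1) = n^k * n := by ring
      _ = n^k * (1 + (n-1)) := by rw [← h1]
      _ = n^k + (n-1) * n^k := by ring
    omega

lemma Nf_high (n k i : ℕ) (hn : 1 ≤ n) (h : 2^k ≤ i) : Nf n (k+1) i = n^k + (n-1) * Nf n k (i - 2^k) := by
  rcases eq_or_lt_of_le h with h' | h'
  · rw [← h', Nf_low n k _ le_rfl, Nf_top n k hn, Nat.sub_self, Nf_zero]; ring
  · simp [Nf, Nat.not_le.mpr h']

lemma Nf_mono (n k : ℕ) (hn : 1 ≤ n) : ∀ i j, i ≤ j → j ≤ 2^k → Nf n k i ≤ Nf n k j := by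
  induction k with
  | zero => intro i j hij _; simp [Nf]; omega
  | succ k ih =>
    intro i j hij hj
    rcases le_or_gt j (2^k) with h | h
    · rw [Nf_low n k i (le_trans hij h), Nf_low n k j h]
      exact ih i j hij h
    · rcases le_or_gt i (2^k) with h2 | h2
      · rw [Nf_low n k i h2, Nf_high n k j hn (le_of_lt h)]
        have := ih i (2^k) h2 le_rfl
        rw [Nf_top n k hn] at this
        omega
      · rw [Nf_high n k i hn (le_of_lt h2), Nf_high n k j hn (le_of_lt h)]
        have := ih (i - 2^k) (j - 2^k) (by omega) (by rw [pow_succ] at hj; omega)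
        exact Nat.add_le_add_left (Nat.mul_le_mul_left _ this) _

lemma Nf_le_top (n k i : ℕ) (hn : 1 ≤ n) (h : i ≤ 2^k) : Nf n k i ≤ n^k := by
  have := Nf_mono n k hn i (2^k) h le_rfl
  rwa [Nf_top n k hn] at this

lemma Nf_one (n k : ℕ) (hn : 1 ≤ n) : Nf n k 1 = 1 := by
  induction k with
  | zero => simp [Nf]
  | succ k ih => rw [Nf_low n k 1 (Nat.one_le_two_pow), ih]

lemma Nf_pos (n k i : ℕ) (hn : 1 ≤ n) (hi : 1 ≤ i) (hik : i ≤ 2^k) : 1 ≤ Nf n k i := by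
  have := Nf_mono n k hn 1 i hi hik
  rw [Nf_one n k hn] at this; omega

lemma Nf_strictMono (n k : ℕ) (hn : 2 ≤ n) : ∀ i j, i < j → j ≤ 2^k → Nf n k i < Nf n k j := by
  induction k with
  | zero => intro i j hij hj; interval_cases j <;> simp [Nf] <;> omega
  | succ k ih =>
    intro i j hij hj
    rcases le_or_gt j (2^k) with h | h
    · rw [Nf_low n k i (by omega), Nf_low n k j h]
      exact ih i j hij h
    · rcases le_or_gt i (2^k) with h2 | h2
      · rw [Nf_low n k i h2, Nf_high n k j (by omega) (le_of_lt h)]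
        have h3 := Nf_le_top n k i (by omega) h2
        have h4 : 1 ≤ Nf n k (j - 2^k) :=
          Nf_pos n k _ (by omega) (by omega) (by rw [pow_succ] at hj; omega)
        have : 1 ≤ n - 1 := by omega
        nlinarith
      · rw [Nf_high n k i (by omega) (le_of_lt h2), Nf_high n k j (by omega) (le_of_lt h)]
        have h5 := ih (i - 2^k) (j - 2^k) (by omega) (by rw [pow_succ] at hj; omega)
        have h6 := Nat.mul_lt_mul_of_pos_left h5 (show 0 < n-1 by omega)
        omega

lemma Nf_SA_TOP (n : ℕ) (hn : 2 ≤ n) : ∀ k : ℕ,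
    (∀ x y, x + y ≤ 2^k → Nf n k x + Nf n k y ≤ Nf n k (x+y)) ∧
    (∀ x y, x ≤ 2^k → y ≤ 2^k → 2^k ≤ x + y →
      Nf n k x + Nf n k y ≤ n^k + Nf n k (x + y - 2^k)) := by
  obtain ⟨m, rfl⟩ : ∃ m, n = m + 2 := ⟨n - 2, by omega⟩
  have hsub : m + 2 - 1 = m + 1 := rfl
  intro k
  induction k with
  | zero =>
    constructor
    · intro x y h
      simp only [pow_zero] at h
      have hx : x ≤ 1 := by omega
      have hy : y ≤ 1 := by omega
      interval_cases x <;> interval_cases y <;> first | omega | simp [Nf]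
    · intro x y hx hy h
      simp only [pow_zero] at hx hy h
      interval_cases x <;> interval_cases y <;> first | omega | (simp [Nf]; omega) | simp [Nf]
  | succ k ih =>
    obtain ⟨SA, TOP⟩ := ih
    have hn1 : (1:ℕ) ≤ m + 2 := by omega
    have hnn : (m+2)^(k+1) = (m+2) * (m+2)^k := by ring
    have key_sa : ∀ x y, y ≤ x → x + y ≤ 2^(k+1) →
        Nf (m+2) (k+1) x + Nf (m+2) (k+1) y ≤ Nf (m+2) (k+1) (x+y) := by
      intro x y hyx h
      have hy : y ≤ 2^k := by rw [pow_succ] at h; omega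
      rcases le_or_gt (2^k) x with hx | hx
      · have hxy : 2^k ≤ x + y := by omega
        rw [Nf_high _ k x hn1 hx, Nf_high _ k (x+y) hn1 hxy, Nf_low _ k y hy, hsub]
        have hidx : x + y - 2^k = (x - 2^k) + y := by omega
        rw [hidx]
        have hsa := SA (x - 2^k) y (by rw [pow_succ] at h; omega)
        have e1 := Nat.mul_le_mul_left (m+1) hsa
        have e3 : Nf (m+2) k y ≤ (m+1) * Nf (m+2) k y := Nat.le_mul_of_pos_left _ (by omega)
        linarith [e1, e3]
      · rcases le_or_gt (x+y) (2^k) with hxy | hxy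
        · rw [Nf_low _ k x (by omega), Nf_low _ k y hy, Nf_low _ k (x+y) hxy]
          exact SA x y hxy
        · rw [Nf_low _ k x (by omega), Nf_low _ k y hy,
            Nf_high _ k (x+y) hn1 (le_of_lt hxy), hsub]
          have htop := TOP x y (by omega) hy (le_of_lt hxy)
          have e3 : Nf (m+2) k (x+y-2^k) ≤ (m+1) * Nf (m+2) k (x+y-2^k) :=
            Nat.le_mul_of_pos_left _ (by omega)
          linarith [htop, e3]
    have key_top : ∀ x y, y ≤ x → x ≤ 2^(k+1) → y ≤ 2^(k+1) → 2^(k+1) ≤ x + y →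
        Nf (m+2) (k+1) x + Nf (m+2) (k+1) y ≤
          (m+2)^(k+1) + Nf (m+2) (k+1) (x + y - 2^(k+1)) := by
      intro x y hyx hx hy h
      have hxk : 2^k ≤ x := by rw [pow_succ] at h; omega
      rcases le_or_gt (2^k) y with hyk | hyk
      · have hξ : x - 2^k ≤ 2^k := by rw [pow_succ] at hx; omega
        have hυ : y - 2^k ≤ 2^k := by rw [pow_succ] at hy; omega
        have hsum : x + y - 2^(k+1) = (x - 2^k) + (y - 2^k) := by rw [pow_succ]; omega
        rw [Nf_high _ k x hn1 hxk, Nf_high _ k y hn1 hyk, hsum, hsub]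
        rcases le_or_gt ((x - 2^k) + (y - 2^k)) (2^k) with hc | hc
        · rw [Nf_low _ k _ hc]
          have hsa := SA (x - 2^k) (y - 2^k) hc
          have hC := Nf_le_top (m+2) k ((x - 2^k) + (y - 2^k)) hn1 hc
          have e1 := Nat.mul_le_mul_left (m+1) hsa
          have e2 := Nat.mul_le_mul_left m hC
          linarith [e1, e2, hnn]
        · rw [Nf_high _ k _ hn1 (le_of_lt hc), hsub]
          have htop := TOP (x - 2^k) (y - 2^k) hξ hυ (le_of_lt hc)
          have e1 := Nat.mul_le_mul_left (m+1) htop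
          linarith [e1, hnn]
      · have hξ : x - 2^k ≤ 2^k := by rw [pow_succ] at hx; omega
        have hsum : x + y - 2^(k+1) = (x - 2^k) + y - 2^k := by rw [pow_succ]; omega
        have hsmall : x + y - 2^(k+1) ≤ 2^k := by omega
        rw [Nf_high _ k x hn1 hxk, Nf_low _ k y (by omega), Nf_low _ k _ hsmall, hsum, hsub]
        have htop := TOP (x - 2^k) y hξ (by omega) (by rw [pow_succ] at h; omega)
        have hA := Nf_le_top (m+2) k (x - 2^k) hn1 hξ
        have e2 := Nat.mul_le_mul_left m hA
        linarith [e2, hnn, htop]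
    constructor
    · intro x y h
      rcases le_total y x with hyx | hyx
      · exact key_sa x y hyx h
      · have h' : y + x ≤ 2^(k+1) := by omega
        have := key_sa y x hyx h'
        rw [Nat.add_comm y x] at this
        omega
    · intro x y hx hy h
      rcases le_total y x with hyx | hyx
      · exact key_top x y hyx hx hy h
      · have h' : 2^(k+1) ≤ y + x := by omega
        have := key_top y x hyx hy hx h'
        rw [Nat.add_comm y x] at this
        omega

lemma Nf_KI (n : ℕ) (hn : 2 ≤ n) : ∀ k a b, b ≤ a → a ≤ 2^k →
    Nf n k a + (n-1) * Nf n k b ≤ Nf n (k+1) (a+b) := by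
  obtain ⟨m, rfl⟩ : ∃ m, n = m + 2 := ⟨n - 2, by omega⟩
  have hsub : m + 2 - 1 = m + 1 := rfl
  have hn1 : (1:ℕ) ≤ m + 2 := by omega
  intro k
  induction k with
  | zero =>
    intro a b hba ha
    simp only [pow_zero] at ha
    have hb : b ≤ 1 := le_trans hba ha
    interval_cases a <;> interval_cases b <;>
      simp [Nf, hsub] <;> omega
  | succ k ih =>
    intro a b hba ha
    have hnn : (m+2)^(k+1) = (m+2) * (m+2)^k := by ring
    obtain ⟨SA, TOP⟩ := Nf_SA_TOP (m+2) (by omega) k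
    rcases le_or_gt a (2^k) with hak | hak
    · -- both low
      have hlow : a + b ≤ 2^(k+1) := by rw [pow_succ]; omega
      rw [Nf_low _ k a hak, Nf_low _ k b (le_trans hba hak), Nf_low _ (k+1) (a+b) hlow]
      exact ih a b hba hak
    · rcases le_or_gt (2^k) b with hbk | hbk
      · -- both high
        have h1 : 2^(k+1) ≤ a + b := by rw [pow_succ]; omega
        have hidx : a + b - 2^(k+1) = (a - 2^k) + (b - 2^k) := by rw [pow_succ]; omega
        rw [Nf_high _ k a hn1 (le_of_lt hak), Nf_high _ k b hn1 hbk,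
          Nf_high _ (k+1) (a+b) hn1 h1, hidx, hsub]
        have hIH := ih (a - 2^k) (b - 2^k) (by omega) (by rw [pow_succ] at ha; omega)
        rw [hsub] at hIH
        have e1 := Nat.mul_le_mul_left (m+1) hIH
        linarith [e1, hnn]
      · -- a high, b low
        have hα : a - 2^k ≤ 2^k := by rw [pow_succ] at ha; omega
        rcases le_or_gt ((a - 2^k) + b) (2^k) with hc | hc
        · have hidx : a + b - 2^k = (a - 2^k) + b := by omega
          have h1 : 2^k ≤ a + b := by omega
          have h2 : a + b ≤ 2^(k+1) := by rw [pow_succ]; omega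
          rw [Nf_high _ k a hn1 (le_of_lt hak), Nf_low _ k b (by omega),
            Nf_low _ (k+1) (a+b) h2, Nf_high _ k (a+b) hn1 h1, hidx, hsub]
          have hsa := SA (a - 2^k) b hc
          have e1 := Nat.mul_le_mul_left (m+1) hsa
          linarith [e1]
        · have h1 : 2^(k+1) ≤ a + b := by rw [pow_succ]; omega
          have hidx : a + b - 2^(k+1) = (a - 2^k) + b - 2^k := by rw [pow_succ]; omega
          have hsm : (a - 2^k) + b - 2^k ≤ 2^k := by omega
          rw [Nf_high _ k a hn1 (le_of_lt hak), Nf_low _ k b (by omega),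
            Nf_high _ (k+1) (a+b) hn1 h1, hidx, Nf_low _ k _ hsm, hsub]
          have htop := TOP (a - 2^k) b hα (by omega) (le_of_lt hc)
          have e1 := Nat.mul_le_mul_left (m+1) htop
          linarith [e1, hnn]

lemma arith_main (n k : ℕ) (hn : 2 ≤ n) (a b q : ℕ) (ha : a ≤ 2^k) (hb : b ≤ 2^k)
    (hq1 : 1 ≤ q) (hq2 : q ≤ 2^(k+1))
    (h1 : Nf n (k+1) (q-1) < n * Nf n k a)
    (h2 : Nf n (k+1) (q-1) < Nf n k a + (n-1) * Nf n k b) :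
    (n-1) * Nf n k (2^k - a) + Nf n k (2^k - b) ≤ Nf n (k+1) (2^(k+1) - q) := by
  have hn1 : (1:ℕ) ≤ n := by omega
  have key : ∀ u v, u ≤ v → v ≤ 2^k → q ≤ u + v →
      (n-1) * Nf n k (2^k - v) + Nf n k (2^k - u) ≤ Nf n (k+1) (2^(k+1) - q) := by
    intro u v huv hv hquv
    have hKI := Nf_KI n hn k (2^k - u) (2^k - v) (by omega) (by omega)
    have hmono : Nf n (k+1) ((2^k - u) + (2^k - v)) ≤ Nf n (k+1) (2^(k+1) - q) := by
      apply Nf_mono n (k+1) hn1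
      · rw [pow_succ]; omega
      · omega
    omega
  rcases le_total b a with hba | hab
  · -- q ≤ a + b  via h2 and KI at (a,b)
    have hKIab := Nf_KI n hn k a b hba ha
    have hlt : Nf n (k+1) (q-1) < Nf n (k+1) (a+b) := lt_of_lt_of_le h2 hKIab
    have hq : q ≤ a + b := by
      by_contra hcon
      have : Nf n (k+1) (a+b) ≤ Nf n (k+1) (q-1) :=
        Nf_mono n (k+1) hn1 _ _ (by omega) (by omega)
      omega
    exact key b a hba ha (by omega)
  · -- a ≤ b : q ≤ 2a via h1
    have hKIaa := Nf_KI n hn k a a le_rfl ha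
    have hna : n * Nf n k a = Nf n k a + (n-1) * Nf n k a := by
      have : n = 1 + (n-1) := by omega
      calc n * Nf n k a = (1 + (n-1)) * Nf n k a := by rw [← this]
      _ = Nf n k a + (n-1) * Nf n k a := by ring
    have hlt : Nf n (k+1) (q-1) < Nf n (k+1) (a+a) := by
      rw [hna] at h1; exact lt_of_lt_of_le h1 hKIaa
    have hq : q ≤ a + a := by
      by_contra hcon
      have : Nf n (k+1) (a+a) ≤ Nf n (k+1) (q-1) :=
        Nf_mono n (k+1) hn1 _ _ (by omega) (by omega)
      omega
    have := key a a le_rfl ha hq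
    have hmono2 : Nf n k (2^k - b) ≤ Nf n k (2^k - a) :=
      Nf_mono n k hn1 _ _ (by omega) (by omega)
    have hmono3 : (n-1) * Nf n k (2^k - b) ≤ (n-1) * Nf n k (2^k - a) :=
      Nat.mul_le_mul_left _ hmono2
    -- goal: (n-1)*Nf(2^k-a) + Nf(2^k-b) ≤ RHS ; have: (n-1)*Nf(2^k-a)+Nf(2^k-a) ≤ RHS
    omega

open Finset

lemma card_univ_fun (n k : ℕ) : (Finset.univ : Finset (Fin k → Fin n)).card = n ^ k := by
  rw [Finset.card_univ]
  simp [Fintype.card_fun]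

lemma card_filter_cons (n k : ℕ) (P : (Fin (k+1) → Fin n) → Prop) [DecidablePred P] :
    (Finset.univ.filter P).card
      = ∑ x : Fin n, (Finset.univ.filter (fun e : Fin k → Fin n => P (Fin.cons x e))).card := by
  rw [Finset.card_eq_sum_card_fiberwise
    (f := fun e : Fin (k+1) → Fin n => e 0) (t := Finset.univ) (fun e _ => mem_univ _)]
  congr 1
  funext x
  apply Finset.card_bij (i := fun e _ => Fin.tail e)
  · intro e he
    simp only [mem_filter, mem_univ, true_and] at he ⊢
    rw [show Fin.cons x (Fin.tail e) = e by
      rw [← he.2]; exact Fin.cons_self_tail e]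
    exact he.1
  · intro e₁ he₁ e₂ he₂ h
    simp only [mem_filter, mem_univ, true_and] at he₁ he₂
    calc e₁ = Fin.cons (e₁ 0) (Fin.tail e₁) := (Fin.cons_self_tail e₁).symm
    _ = Fin.cons (e₂ 0) (Fin.tail e₂) := by rw [h, he₁.2, he₂.2]
    _ = e₂ := Fin.cons_self_tail e₂
  · intro t ht
    simp only [mem_filter, mem_univ, true_and] at ht
    refine ⟨Fin.cons x t, ?_, ?_⟩
    · simp only [mem_filter, mem_univ, true_and]
      refine ⟨ht, ?_⟩
      simp
    · simp

def Fnex (n k : ℕ) (F : Finset (Fin (k+1) → Fin n)) (x : Fin n) : Finset (Fin k → Fin n) :=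
  (F.filter (fun f => f 0 ≠ x)).image Fin.tail

def Fsl (n k : ℕ) (F : Finset (Fin (k+1) → Fin n)) (x : Fin n) : Finset (Fin k → Fin n) :=
  (F.filter (fun f => f 0 = x)).image Fin.tail

lemma meets_cons_iff {n k : ℕ} (x : Fin n) (e : Fin k → Fin n) (f : Fin (k+1) → Fin n) :
    (∃ i, (Fin.cons x e : Fin (k+1) → Fin n) i = f i) ↔ f 0 = x ∨ ∃ j, e j = Fin.tail f j := by
  constructor
  · rintro ⟨i, hi⟩
    induction i using Fin.cases with
    | zero => left; rw [← hi]; rfl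
    | succ j => right; exact ⟨j, by simp only [Fin.tail]; rw [← hi]; simp⟩
  · rintro (h | ⟨j, hj⟩)
    · exact ⟨0, by simp [h]⟩
    · exact ⟨j.succ, by simpa [Fin.tail] using hj⟩

lemma mem_blocker_iff {n k : ℕ} (F : Finset (Fin k → Fin n)) (e : Fin k → Fin n) :
    e ∈ blocker n k F ↔ ∀ f ∈ F, ∃ i, e i = f i := by
  simp [blocker]

lemma cons_mem_blocker {n k : ℕ} (F : Finset (Fin (k+1) → Fin n)) (x : Fin n)
    (e : Fin k → Fin n) :
    (Fin.cons x e : Fin (k+1) → Fin n) ∈ blocker n (k+1) F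
      ↔ e ∈ blocker n k (Fnex n k F x) := by
  rw [mem_blocker_iff, mem_blocker_iff]
  constructor
  · intro h t ht
    simp only [Fnex, mem_image, mem_filter] at ht
    obtain ⟨f, ⟨hfF, hfx⟩, rfl⟩ := ht
    rcases (meets_cons_iff x e f).mp (h f hfF) with h0 | h1
    · exact absurd h0 hfx
    · exact h1
  · intro h f hf
    rcases eq_or_ne (f 0) x with h0 | h0
    · exact ⟨0, by simp [h0]⟩
    · apply (meets_cons_iff x e f).mpr
      right
      exact h (Fin.tail f) (by
        simp only [Fnex, mem_image, mem_filter]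
        exact ⟨f, ⟨hf, h0⟩, rfl⟩)

lemma blocker_card_sum {n k : ℕ} (F : Finset (Fin (k+1) → Fin n)) :
    (blocker n (k+1) F).card = ∑ x : Fin n, (blocker n k (Fnex n k F x)).card := by
  show (Finset.univ.filter _).card = _
  rw [card_filter_cons n k (fun e => ∀ f ∈ F, ∃ i, e i = f i)]
  congr 1
  funext x
  congr 1
  ext e
  simp only [mem_filter, mem_univ, true_and]
  rw [← mem_blocker_iff]
  exact cons_mem_blocker F x e

lemma blocker_anti {n k : ℕ} {F G : Finset (Fin k → Fin n)} (h : F ⊆ G) :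
    blocker n k G ⊆ blocker n k F := by
  intro e he
  rw [mem_blocker_iff] at he ⊢
  exact fun f hf => he f (h hf)

lemma blocker_card_le_univ {n k : ℕ} (F : Finset (Fin k → Fin n)) :
    (blocker n k F).card ≤ n ^ k := by
  rw [← card_univ_fun n k]
  exact Finset.card_le_card (Finset.filter_subset _ _)

lemma card_Fsl {n k : ℕ} (F : Finset (Fin (k+1) → Fin n)) (x : Fin n) :
    (Fsl n k F x).card = (F.filter (fun f => f 0 = x)).card := by
  apply Finset.card_image_of_injOn
  intro f hf g hg h
  simp only [coe_filter, Set.mem_setOf_eq] at hf hg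
  calc f = Fin.cons (f 0) (Fin.tail f) := (Fin.cons_self_tail f).symm
  _ = Fin.cons (g 0) (Fin.tail g) := by rw [h, hf.2, hg.2]
  _ = g := Fin.cons_self_tail g

lemma Fsl_subset_Fnex {n k : ℕ} (F : Finset (Fin (k+1) → Fin n)) {x y : Fin n} (h : x ≠ y) :
    Fsl n k F x ⊆ Fnex n k F y := by
  apply Finset.image_subset_image
  intro f hf
  simp only [mem_filter] at hf ⊢
  exact ⟨hf.1, by rw [hf.2]; exact h⟩

lemma card_slices {n k : ℕ} (F : Finset (Fin (k+1) → Fin n)) :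
    F.card = ∑ x : Fin n, (F.filter (fun f => f 0 = x)).card :=
  Finset.card_eq_sum_card_fiberwise (fun f _ => mem_univ _)

lemma fin_one_ext {n : ℕ} {e f : Fin 1 → Fin n} (h : e 0 = f 0) : e = f := by
  funext i
  have : i = 0 := Subsingleton.elim i 0
  rw [this, h]

lemma blocker_base {n : ℕ} (hn : 2 ≤ n) (F : Finset (Fin 1 → Fin n)) (q : ℕ)
    (hq1 : 1 ≤ q) (hq2 : q ≤ 2) (hc : Nf n 1 (q-1) < F.card) :
    (blocker n 1 F).card ≤ Nf n 1 (2 - q) := by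
  interval_cases q
  · -- q = 1 : F nonempty, blocker ⊆ {f₀}
    rw [Nf_zero] at hc
    obtain ⟨f₀, hf₀⟩ := Finset.card_pos.mp hc
    have hsub : blocker n 1 F ⊆ {f₀} := by
      intro e he
      rw [mem_blocker_iff] at he
      obtain ⟨i, hi⟩ := he f₀ hf₀
      have : i = 0 := Subsingleton.elim i 0
      rw [this] at hi
      simp [fin_one_ext hi]
    calc (blocker n 1 F).card ≤ ({f₀} : Finset _).card := Finset.card_le_card hsub
    _ = 1 := Finset.card_singleton f₀
    _ = Nf n 1 (2-1) := (Nf_one n 1 (by omega)).symm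
  · -- q = 2 : F has two elements, blocker empty
    rw [Nf_one n 1 (by omega)] at hc
    obtain ⟨f, hf, g, hg, hfg⟩ := Finset.one_lt_card.mp hc
    have hsub : blocker n 1 F = ∅ := by
      rw [Finset.eq_empty_iff_forall_notMem]
      intro e he
      rw [mem_blocker_iff] at he
      obtain ⟨i, hi⟩ := he f hf
      obtain ⟨i', hi'⟩ := he g hg
      rw [Subsingleton.elim i 0] at hi
      rw [Subsingleton.elim i' 0] at hi'
      exact hfg (fin_one_ext (hi.symm.trans hi'))
    rw [hsub]
    simp [Nf_zero]

lemma exists_rank (n k m : ℕ) (hn : 1 ≤ n) (h1 : 1 ≤ m) (h2 : m ≤ n^k) :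
    ∃ a, 1 ≤ a ∧ a ≤ 2^k ∧ m ≤ Nf n k a ∧ Nf n k (a-1) < m := by
  have hex : ∃ α, m ≤ Nf n k α := ⟨2^k, by rw [Nf_top n k hn]; exact h2⟩
  refine ⟨Nat.find hex, ?_, ?_, Nat.find_spec hex, ?_⟩
  · rcases Nat.eq_zero_or_pos (Nat.find hex) with h0 | h
    · exfalso
      have h3 := Nat.find_spec hex
      rw [h0, Nf_zero] at h3
      omega
    · exact h
  · apply Nat.find_le; rw [Nf_top n k hn]; exact h2
  · have h4 : 1 ≤ Nat.find hex := by
      rcases Nat.eq_zero_or_pos (Nat.find hex) with h0 | h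
      · exfalso
        have h3 := Nat.find_spec hex
        rw [h0, Nf_zero] at h3
        omega
      · exact h
    have := Nat.find_min hex (m := Nat.find hex - 1) (by omega)
    omega

lemma blocker_card_le (n : ℕ) (hn : 2 ≤ n) :
    ∀ k, 1 ≤ k → ∀ (F : Finset (Fin k → Fin n)) (q : ℕ), 1 ≤ q → q ≤ 2^k →
      Nf n k (q-1) < F.card → (blocker n k F).card ≤ Nf n k (2^k - q) := by
  intro k
  induction k with
  | zero => omega
  | succ k ih =>
    intro _ F q hq1 hq2 hc
    rcases Nat.eq_zero_or_pos k with rfl | hk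
    · exact blocker_base hn F q hq1 (by simpa using hq2) (by simpa using hc)
    -- main inductive step
    have hn1 : (1:ℕ) ≤ n := by omega
    -- max slice
    obtain ⟨x₁, -, hx₁⟩ := Finset.exists_max_image Finset.univ
      (fun x : Fin n => (F.filter (fun f => f 0 = x)).card)
      ⟨⟨0, by omega⟩, Finset.mem_univ _⟩
    have hx₁' : ∀ x : Fin n, (F.filter (fun f => f 0 = x)).card
        ≤ (F.filter (fun f => f 0 = x₁)).card := fun x => hx₁ x (Finset.mem_univ _)
    clear hx₁
    -- F nonempty so the max slice is nonempty
    have hFpos : 0 < F.card := by have := Nf_zero n (k+1); omega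
    have hs1 : 1 ≤ (F.filter (fun f => f 0 = x₁)).card := by
      obtain ⟨f₀, hf₀⟩ := Finset.card_pos.mp hFpos
      have h1 : 0 < (F.filter (fun f => f 0 = f₀ 0)).card :=
        Finset.card_pos.mpr ⟨f₀, Finset.mem_filter.mpr ⟨hf₀, rfl⟩⟩
      exact le_trans h1 (hx₁' (f₀ 0))
    -- cardinality inequalities
    have ht_ns : F.card ≤ n * (F.filter (fun f => f 0 = x₁)).card := by
      rw [card_slices F]
      calc ∑ x : Fin n, (F.filter (fun f => f 0 = x)).card
          ≤ ∑ _x : Fin n, (F.filter (fun f => f 0 = x₁)).card :=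
            Finset.sum_le_sum (fun x _ => hx₁' x)
      _ = n * (F.filter (fun f => f 0 = x₁)).card := by
            simp [Finset.sum_const, Finset.card_univ, mul_comm]
    have ht_su : F.card ≤ (F.filter (fun f => f 0 = x₁)).card
        + (n-1) * (Fnex n k F x₁).card := by
      rw [card_slices F]
      rw [← Finset.sum_erase_add _ _ (Finset.mem_univ x₁)]
      have hbound : ∀ x ∈ Finset.univ.erase x₁,
          (F.filter (fun f => f 0 = x)).card ≤ (Fnex n k F x₁).card := by
        intro x hx
        have hxne : x ≠ x₁ := Finset.ne_of_mem_erase hx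
        calc (F.filter (fun f => f 0 = x)).card = (Fsl n k F x).card := (card_Fsl F x).symm
        _ ≤ (Fnex n k F x₁).card := Finset.card_le_card (Fsl_subset_Fnex F hxne)
      calc (∑ x ∈ Finset.univ.erase x₁, (F.filter (fun f => f 0 = x)).card)
            + (F.filter (fun f => f 0 = x₁)).card
          ≤ (∑ _x ∈ Finset.univ.erase x₁, (Fnex n k F x₁).card)
            + (F.filter (fun f => f 0 = x₁)).card :=
            Nat.add_le_add_right (Finset.sum_le_sum hbound) _
      _ = (n-1) * (Fnex n k F x₁).card + (F.filter (fun f => f 0 = x₁)).card := by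
            rw [Finset.sum_const, Finset.card_erase_of_mem (Finset.mem_univ x₁)]
            simp [Finset.card_univ, mul_comm]
      _ = (F.filter (fun f => f 0 = x₁)).card + (n-1) * (Fnex n k F x₁).card := by ring
    -- choose a
    have hsle : (F.filter (fun f => f 0 = x₁)).card ≤ n^k := by
      have h1 : (Fsl n k F x₁).card ≤ n^k := by
        rw [← card_univ_fun n k]
        exact Finset.card_le_card (Finset.subset_univ _)
      rw [card_Fsl F x₁] at h1
      exact h1
    obtain ⟨a, ha1, ha2k, hsa, haprev⟩ :=
      exists_rank n k (F.filter (fun f => f 0 = x₁)).card hn1 hs1 hsle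
    have bound_a : (blocker n k (Fsl n k F x₁)).card ≤ Nf n k (2^k - a) := by
      apply ih hk (Fsl n k F x₁) a ha1 ha2k
      rw [card_Fsl F x₁]
      exact haprev
    -- choose b
    have hule : (Fnex n k F x₁).card ≤ n^k := by
      rw [← card_univ_fun n k]
      exact Finset.card_le_card (Finset.subset_univ _)
    obtain ⟨b, hb2k, hub, bound_b⟩ :
        ∃ b, b ≤ 2^k ∧ (Fnex n k F x₁).card ≤ Nf n k b ∧
          (blocker n k (Fnex n k F x₁)).card ≤ Nf n k (2^k - b) := by
      rcases Nat.eq_zero_or_pos (Fnex n k F x₁).card with hu0 | hu1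
      · refine ⟨0, Nat.zero_le _, by rw [Nf_zero]; exact le_of_eq hu0, ?_⟩
        rw [Nat.sub_zero, Nf_top n k hn1]
        exact blocker_card_le_univ _
      · obtain ⟨b, hb1, hb2k, hub, hbprev⟩ :=
          exists_rank n k (Fnex n k F x₁).card hn1 hu1 hule
        exact ⟨b, hb2k, hub, ih hk (Fnex n k F x₁) b hb1 hb2k hbprev⟩
    -- arithmetic
    have harith : (n-1) * Nf n k (2^k - a) + Nf n k (2^k - b) ≤ Nf n (k+1) (2^(k+1) - q) := by
      apply arith_main n k hn a b q ha2k hb2k hq1 hq2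
      · calc Nf n (k+1) (q-1) < F.card := hc
        _ ≤ n * (F.filter (fun f => f 0 = x₁)).card := ht_ns
        _ ≤ n * Nf n k a := Nat.mul_le_mul_left n hsa
      · calc Nf n (k+1) (q-1) < F.card := hc
        _ ≤ (F.filter (fun f => f 0 = x₁)).card + (n-1) * (Fnex n k F x₁).card := ht_su
        _ ≤ Nf n k a + (n-1) * Nf n k b :=
            Nat.add_le_add hsa (Nat.mul_le_mul_left _ hub)
    -- combine
    rw [blocker_card_sum F]
    have hterm : ∀ x ∈ Finset.univ.erase x₁,
        (blocker n k (Fnex n k F x)).card ≤ Nf n k (2^k - a) := by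
      intro x hx
      have hxne : x₁ ≠ x := fun h => (Finset.ne_of_mem_erase hx) h.symm
      calc (blocker n k (Fnex n k F x)).card
          ≤ (blocker n k (Fsl n k F x₁)).card :=
            Finset.card_le_card (blocker_anti (Fsl_subset_Fnex F hxne))
      _ ≤ Nf n k (2^k - a) := bound_a
    rw [← Finset.sum_erase_add _ _ (Finset.mem_univ x₁)]
    calc (∑ x ∈ Finset.univ.erase x₁, (blocker n k (Fnex n k F x)).card)
          + (blocker n k (Fnex n k F x₁)).card
        ≤ (∑ _x ∈ Finset.univ.erase x₁, Nf n k (2^k - a)) + Nf n k (2^k - b) :=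
          Nat.add_le_add (Finset.sum_le_sum hterm) bound_b
    _ = (n-1) * Nf n k (2^k - a) + Nf n k (2^k - b) := by
          rw [Finset.sum_const, Finset.card_erase_of_mem (Finset.mem_univ x₁)]
          simp [Finset.card_univ, mul_comm]
    _ ≤ Nf n (k+1) (2^(k+1) - q) := harith

lemma vcond_succ {n r : ℕ} (e : Fin (r+1) → Fin n) (j : ℕ) :
    vcond e (j+1) = vcond (Fin.tail e) j := by
  unfold vcond
  rcases lt_or_ge j r with h | h
  · rw [dif_pos (by omega : j + 1 < r + 1), dif_pos h]
    congr 1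
  · rw [dif_neg (by omega), dif_neg (by omega)]

lemma edgeCond_succ {n r : ℕ} (e : Fin (r+1) → Fin n) :
    ∀ (s : List Bool) (j : ℕ), edgeCond e (j+1) s = edgeCond (Fin.tail e) j s := by
  intro s
  induction s with
  | nil => intro j; exact vcond_succ e j
  | cons b s ih =>
    intro j
    cases b
    · show (vcond e (j+1) && edgeCond e (j+2) s) = _
      rw [vcond_succ e j, ih (j+1)]
      rfl
    · show (vcond e (j+1) || edgeCond e (j+2) s) = _
      rw [vcond_succ e j, ih (j+1)]
      rfl

lemma vcond_cons_zero {n r : ℕ} (x : Fin n) (e : Fin r → Fin n) :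
    vcond (Fin.cons x e : Fin (r+1) → Fin n) 0 = decide ((x : ℕ) = 0) := by
  unfold vcond
  rw [dif_pos (by omega : 0 < r + 1)]
  rfl

lemma fval_nil (n r : ℕ) (hn : 1 ≤ n) : fval n (r+1) [] = n^r := by
  unfold fval Fset
  rw [card_filter_cons n r (fun e => edgeCond e 0 [] = true)]
  have hx0 : ∀ x : Fin n,
      (Finset.univ.filter (fun e : Fin r → Fin n =>
        edgeCond (Fin.cons x e : Fin (r+1) → Fin n) 0 [] = true)).card
      = if x = (⟨0, by omega⟩ : Fin n) then n^r else 0 := by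
    intro x
    show (Finset.univ.filter (fun e : Fin r → Fin n =>
      vcond (Fin.cons x e : Fin (r+1) → Fin n) 0 = true)).card = _
    by_cases hx : x = (⟨0, by omega⟩ : Fin n)
    · rw [if_pos hx]
      rw [← card_univ_fun n r]
      congr 1
      apply Finset.filter_true_of_mem
      intro e _
      rw [vcond_cons_zero, hx]
      simp
    · rw [if_neg hx]
      rw [Finset.card_eq_zero]
      apply Finset.filter_false_of_mem
      intro e _
      rw [vcond_cons_zero]
      simp only [decide_eq_true_eq]
      intro hc
      exact hx (Fin.ext hc)
  rw [Finset.sum_congr rfl (fun x _ => hx0 x)]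
  rw [Finset.sum_ite_eq' Finset.univ (⟨0, by omega⟩ : Fin n) (fun _ => n^r)]
  simp

lemma fval_cons_false (n r : ℕ) (hn : 1 ≤ n) (s : List Bool) :
    fval n (r+1) (false :: s) = fval n r s := by
  unfold fval Fset
  rw [card_filter_cons n r (fun e => edgeCond e 0 (false :: s) = true)]
  have hx0 : ∀ x : Fin n,
      (Finset.univ.filter (fun e : Fin r → Fin n =>
        edgeCond (Fin.cons x e : Fin (r+1) → Fin n) 0 (false :: s) = true)).card
      = if x = (⟨0, by omega⟩ : Fin n)
          then (Finset.univ.filter (fun e : Fin r → Fin n => edgeCond e 0 s = true)).card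
          else 0 := by
    intro x
    have hcond : ∀ e : Fin r → Fin n,
        edgeCond (Fin.cons x e : Fin (r+1) → Fin n) 0 (false :: s)
        = (decide ((x:ℕ) = 0) && edgeCond e 0 s) := by
      intro e
      show (vcond _ 0 && edgeCond _ 1 (s)) = _
      rw [vcond_cons_zero, edgeCond_succ _ s 0, Fin.tail_cons]
    by_cases hx : x = (⟨0, by omega⟩ : Fin n)
    · rw [if_pos hx]
      congr 1
      apply Finset.filter_congr
      intro e _
      rw [hcond e, hx]
      simp
    · rw [if_neg hx]
      rw [Finset.card_eq_zero]
      apply Finset.filter_false_of_mem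
      intro e _
      rw [hcond e]
      simp only [Bool.and_eq_true, decide_eq_true_eq]
      rintro ⟨hc, -⟩
      exact hx (Fin.ext hc)
  rw [Finset.sum_congr rfl (fun x _ => hx0 x)]
  rw [Finset.sum_ite_eq' Finset.univ (⟨0, by omega⟩ : Fin n)]
  simp

lemma fval_cons_true (n r : ℕ) (hn : 1 ≤ n) (s : List Bool) :
    fval n (r+1) (true :: s) = n^r + (n-1) * fval n r s := by
  unfold fval Fset
  rw [card_filter_cons n r (fun e => edgeCond e 0 (true :: s) = true)]
  have hx0 : ∀ x : Fin n,
      (Finset.univ.filter (fun e : Fin r → Fin n =>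
        edgeCond (Fin.cons x e : Fin (r+1) → Fin n) 0 (true :: s) = true)).card
      = if x = (⟨0, by omega⟩ : Fin n)
          then n^r
          else (Finset.univ.filter (fun e : Fin r → Fin n => edgeCond e 0 s = true)).card := by
    intro x
    have hcond : ∀ e : Fin r → Fin n,
        edgeCond (Fin.cons x e : Fin (r+1) → Fin n) 0 (true :: s)
        = (decide ((x:ℕ) = 0) || edgeCond e 0 s) := by
      intro e
      show (vcond _ 0 || edgeCond _ 1 (s)) = _
      rw [vcond_cons_zero, edgeCond_succ _ s 0, Fin.tail_cons]
    by_cases hx : x = (⟨0, by omega⟩ : Fin n)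
    · rw [if_pos hx]
      rw [← card_univ_fun n r]
      congr 1
      apply Finset.filter_true_of_mem
      intro e _
      rw [hcond e, hx]
      simp
    · rw [if_neg hx]
      congr 1
      apply Finset.filter_congr
      intro e _
      rw [hcond e]
      have : ((x:ℕ) = 0) = False := by
        simp only [eq_iff_iff, iff_false]
        intro hc
        exact hx (Fin.ext hc)
      simp [this]
  rw [Finset.sum_congr rfl (fun x _ => hx0 x)]
  rw [← Finset.sum_erase_add _ _ (Finset.mem_univ (⟨0, by omega⟩ : Fin n))]
  rw [if_pos rfl]
  have herase : ∀ x ∈ Finset.univ.erase (⟨0, by omega⟩ : Fin n),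
      (if x = (⟨0, by omega⟩ : Fin n)
          then n^r
          else (Finset.univ.filter (fun e : Fin r → Fin n => edgeCond e 0 s = true)).card)
      = (Finset.univ.filter (fun e : Fin r → Fin n => edgeCond e 0 s = true)).card := by
    intro x hx
    rw [if_neg (Finset.ne_of_mem_erase hx)]
  rw [Finset.sum_congr rfl herase, Finset.sum_const,
    Finset.card_erase_of_mem (Finset.mem_univ _)]
  simp only [Finset.card_univ, Fintype.card_fin, smul_eq_mul]
  ring

lemma edgeCond_zero_fn {n r : ℕ} (hn : 1 ≤ n) :
    ∀ (s : List Bool) (j : ℕ), j + s.length < r →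
      edgeCond ((fun _ => ⟨0, by omega⟩) : Fin r → Fin n) j s = true := by
  intro s
  induction s with
  | nil =>
    intro j hj
    show vcond _ j = true
    unfold vcond
    rw [dif_pos (by simpa using hj)]
    simp
  | cons b s ih =>
    intro j hj
    simp only [List.length_cons] at hj
    have hv : vcond ((fun _ => ⟨0, by omega⟩) : Fin r → Fin n) j = true := by
      unfold vcond
      rw [dif_pos (by omega)]
      simp
    cases b
    · show (vcond _ j && edgeCond _ (j+1) s) = true
      rw [hv, ih (j+1) (by omega)]
      rfl
    · show (vcond _ j || edgeCond _ (j+1) s) = true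
      rw [hv]
      rfl

lemma edgeCond_one_fn {n r : ℕ} (hn : 2 ≤ n) :
    ∀ (s : List Bool) (j : ℕ),
      edgeCond ((fun _ => ⟨1, by omega⟩) : Fin r → Fin n) j s = false := by
  intro s
  have hv : ∀ j, vcond (fun _ => (⟨1, by omega⟩ : Fin n) : Fin r → Fin n) j = false := by
    intro j
    unfold vcond
    split
    · simp
    · rfl
  induction s with
  | nil => intro j; exact hv j
  | cons b s ih =>
    intro j
    cases b
    · show (vcond _ j && edgeCond _ (j+1) s) = false
      rw [hv j]
      rfl
    · show (vcond _ j || edgeCond _ (j+1) s) = false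
      rw [hv j, ih (j+1)]
      rfl

lemma fval_pos {n r : ℕ} (hn : 1 ≤ n) (σ : List Bool) (hσ : σ.length < r) :
    1 ≤ fval n r σ := by
  apply Finset.card_pos.mpr
  exact ⟨fun _ => (⟨0, by omega⟩ : Fin n),
    Finset.mem_filter.mpr ⟨Finset.mem_univ _, edgeCond_zero_fn hn σ 0 (by omega)⟩⟩

lemma fval_lt {n r : ℕ} (hn : 2 ≤ n) (σ : List Bool) : fval n r σ < n^r := by
  rw [← card_univ_fun n r]
  apply Finset.card_lt_card
  unfold Fset
  rw [Finset.ssubset_iff_of_subset (Finset.filter_subset _ _)]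
  refine ⟨fun _ => (⟨1, by omega⟩ : Fin n), Finset.mem_univ _, ?_⟩
  rw [Finset.mem_filter]
  rintro ⟨-, hcond⟩
  rw [edgeCond_one_fn hn σ 0] at hcond
  exact Bool.false_ne_true hcond

lemma mem_PsiSet {r : ℕ} (σ : List Bool) : σ ∈ PsiSet r ↔ σ.length < r := by
  unfold PsiSet
  rw [Finset.mem_biUnion]
  constructor
  · rintro ⟨m, hm, hσ⟩
    rw [Finset.mem_image] at hσ
    obtain ⟨g, -, rfl⟩ := hσ
    rw [List.length_ofFn]
    exact Finset.mem_range.mp hm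
  · intro h
    refine ⟨σ.length, Finset.mem_range.mpr h, ?_⟩
    rw [Finset.mem_image]
    exact ⟨σ.get, Finset.mem_univ _, List.ofFn_get σ⟩

lemma PsiSet_succ (r : ℕ) :
    PsiSet (r+1) = insert []
      ((PsiSet r).image (List.cons false) ∪ (PsiSet r).image (List.cons true)) := by
  ext σ
  rw [mem_PsiSet, Finset.mem_insert, Finset.mem_union, Finset.mem_image, Finset.mem_image]
  cases σ with
  | nil => simp
  | cons b s =>
    simp only [List.length_cons, List.cons.injEq, reduceCtorEq, false_or]
    constructor
    · intro h
      cases b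
      · left; exact ⟨s, (mem_PsiSet s).mpr (by omega), rfl, rfl⟩
      · right; exact ⟨s, (mem_PsiSet s).mpr (by omega), rfl, rfl⟩
    · rintro (⟨a, ha, hb, rfl⟩ | ⟨a, ha, hb, rfl⟩) <;>
      · rw [mem_PsiSet] at ha
        omega

lemma Nf_image_succ (n r : ℕ) (hn : 1 ≤ n) :
    Finset.image (Nf n (r+1)) (Finset.range (2^(r+1)+1))
      = Finset.image (Nf n r) (Finset.range (2^r+1))
        ∪ (Finset.image (Nf n r) (Finset.range (2^r+1))).image
            (fun v => n^r + (n-1) * v) := by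
  ext v
  simp only [Finset.mem_image, Finset.mem_union, Finset.mem_range]
  constructor
  · rintro ⟨i, hi, rfl⟩
    rcases le_or_gt i (2^r) with h | h
    · left; exact ⟨i, by omega, (Nf_low n r i h).symm⟩
    · right
      refine ⟨Nf n r (i - 2^r), ⟨i - 2^r, by rw [pow_succ] at hi; omega, rfl⟩, ?_⟩
      rw [Nf_high n r i hn (by omega)]
  · rintro (⟨i, hi, rfl⟩ | ⟨w, ⟨j, hj, rfl⟩, rfl⟩)
    · exact ⟨i, by rw [pow_succ]; omega, Nf_low n r i (by omega)⟩
    · refine ⟨2^r + j, by rw [pow_succ]; omega, ?_⟩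
      rw [Nf_high n r _ hn (by omega)]
      have hj2 : 2^r + j - 2^r = j := by omega
      rw [hj2]

lemma insert_union_image_aux (A : Finset ℕ) (g : ℕ → ℕ) (z t : ℕ)
    (hz : g 0 = z) (ht : g z = t) :
    insert 0 (insert t (insert z (A ∪ A.image g)))
      = insert 0 (insert z A) ∪ (insert 0 (insert z A)).image g := by
  rw [Finset.image_insert, Finset.image_insert, hz, ht]
  ext v
  simp only [Finset.mem_insert, Finset.mem_union, Finset.mem_image]
  tauto

lemma Nvals_eq_image (n : ℕ) (hn : 2 ≤ n) :
    ∀ r, 1 ≤ r → Nvals n r = Finset.image (Nf n r) (Finset.range (2^r+1)) := by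
  have hn1 : (1:ℕ) ≤ n := by omega
  intro r
  induction r with
  | zero => omega
  | succ r ih =>
    intro _hr1
    rcases Nat.eq_zero_or_pos r with rfl | hr
    · -- base case r+1 = 1
      show Nvals n 1 = Finset.image (Nf n 1) (Finset.range (2^1+1))
      have hPsi : PsiSet 1 = {[]} := by
        ext σ
        rw [mem_PsiSet, Finset.mem_singleton]
        constructor
        · intro h
          cases σ with
          | nil => rfl
          | cons b s => simp at h
        · rintro rfl; simp
      unfold Nvals
      rw [hPsi]
      have h1 : fval n 1 [] = 1 := by rw [fval_nil n 0 hn1]; rfl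
      have hNf2 : Nf n 1 2 = n ^ 1 := by
        rw [Nf_high n 0 2 hn1 (by norm_num)]
        simp [Nf]
        omega
      ext v
      simp only [Finset.image_singleton, h1, Finset.mem_insert, Finset.mem_singleton,
        Finset.mem_image, Finset.mem_range]
      constructor
      · rintro (rfl | rfl | rfl)
        · exact ⟨0, by norm_num, Nf_zero n 1⟩
        · exact ⟨2, by norm_num, hNf2⟩
        · exact ⟨1, by norm_num, Nf_one n 1 hn1⟩
      · rintro ⟨i, hi, rfl⟩
        interval_cases i
        · left; exact Nf_zero n 1
        · right; right; exact Nf_one n 1 hn1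
        · right; left; exact hNf2
    · -- inductive step
      have hIH := ih hr
      rw [Nf_image_succ n r hn1, ← hIH]
      have himgf : Finset.image (fval n (r+1)) ((PsiSet r).image (List.cons false))
          = Finset.image (fval n r) (PsiSet r) := by
        rw [Finset.image_image]
        apply Finset.image_congr
        intro s _
        exact fval_cons_false n r hn1 s
      have himgt : Finset.image (fval n (r+1)) ((PsiSet r).image (List.cons true))
          = Finset.image (fun v => n^r + (n-1) * v) (Finset.image (fval n r) (PsiSet r)) := by
        rw [Finset.image_image, Finset.image_image]
        apply Finset.image_congr
        intro s _
        exact fval_cons_true n r hn1 s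
      have hgtop : n^r + (n-1) * n^r = n^(r+1) := by
        have h1 : n = 1 + (n-1) := by omega
        calc n^r + (n-1) * n^r = (1 + (n-1)) * n^r := by ring
        _ = n * n^r := by rw [← h1]
        _ = n^(r+1) := by ring
      show Nvals n (r+1)
        = insert 0 (insert (n^r) (Finset.image (fval n r) (PsiSet r)))
          ∪ (insert 0 (insert (n^r) (Finset.image (fval n r) (PsiSet r)))).image
              (fun v => n^r + (n-1) * v)
      unfold Nvals
      rw [PsiSet_succ r, Finset.image_insert, Finset.image_union, himgf, himgt,
        fval_nil n r hn1]
      exact insert_union_image_aux (Finset.image (fval n r) (PsiSet r))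
        (fun v => n^r + (n-1) * v) (n^r) (n^(r+1)) (by simp) hgtop

lemma Nf_mono' (n k : ℕ) (hn : 1 ≤ n) : ∀ i j, i ≤ j → Nf n k i ≤ Nf n k j := by
  induction k with
  | zero => intro i j hij; simp [Nf]; omega
  | succ k ih =>
    intro i j hij
    rcases le_or_gt j (2^k) with hj | hj
    · rw [Nf_low n k i (by omega), Nf_low n k j hj]
      exact ih i j hij
    · rcases le_or_gt i (2^k) with hi | hi
      · rw [Nf_low n k i hi, Nf_high n k j hn (by omega)]
        have := Nf_le_top n k i hn hi
        omega
      · rw [Nf_high n k i hn (by omega), Nf_high n k j hn (by omega)]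
        have := ih (i - 2^k) (j - 2^k) (by omega)
        have := Nat.mul_le_mul_left (n-1) this
        omega

lemma sort_Nvals (n r : ℕ) (hn : 2 ≤ n) (hr : 1 ≤ r) :
    (Nvals n r).sort (· ≤ ·) = (List.range (2^r+1)).map (Nf n r) := by
  have hn1 : (1:ℕ) ≤ n := by omega
  have hnodup : ((List.range (2^r+1)).map (Nf n r)).Nodup := by
    apply List.Nodup.map_on
    · intro x hx y hy hxy
      rw [List.mem_range] at hx hy
      rcases Nat.lt_trichotomy x y with h | h | h
      · exact absurd hxy (Nat.ne_of_lt (Nf_strictMono n r hn x y h (by omega)))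
      · exact h
      · exact absurd hxy.symm (Nat.ne_of_lt (Nf_strictMono n r hn y x h (by omega)))
    · exact List.nodup_range
  have hsorted : ((List.range (2^r+1)).map (Nf n r)).Pairwise (· ≤ ·) := by
    apply List.Pairwise.map (R := (· < ·))
    · intro a b hab
      exact Nf_mono' n r hn1 a b (le_of_lt hab)
    · exact List.pairwise_lt_range
  apply List.Perm.eq_of_pairwise' (Finset.pairwise_sort _ _) hsorted ?_
  apply List.perm_of_nodup_nodup_toFinset_eq (Finset.sort_nodup _ _) hnodup
  rw [Finset.sort_toFinset, Nvals_eq_image n hn r hr]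
  ext v
  simp

lemma Nseq_eq (n r i : ℕ) (hn : 2 ≤ n) (hr : 1 ≤ r) (hi : i ≤ 2^r) :
    Nseq n r i = Nf n r i := by
  unfold Nseq
  rw [sort_Nvals n r hn hr]
  have hlen : i < ((List.range (2^r+1)).map (Nf n r)).length := by
    rw [List.length_map, List.length_range]
    omega
  rw [List.getD_eq_getElem _ _ hlen]
  simp

lemma Nseq_big (n r i : ℕ) (hn : 2 ≤ n) (hr : 1 ≤ r) (hi : 2^r < i) :
    Nseq n r i = 0 := by
  unfold Nseq
  rw [sort_Nvals n r hn hr]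
  apply List.getD_eq_default
  rw [List.length_map, List.length_range]
  omega

lemma vcond_true_iff {n r : ℕ} (e : Fin r → Fin n) (j : ℕ) :
    vcond e j = true ↔ ∃ h : j < r, (e ⟨j, h⟩ : ℕ) = 0 := by
  unfold vcond
  constructor
  · intro hv
    by_cases hj : j < r
    · rw [dif_pos hj] at hv
      exact ⟨hj, by simpa using hv⟩
    · rw [dif_neg hj] at hv
      exact absurd hv (by simp)
  · rintro ⟨h, h0⟩
    rw [dif_pos h]
    simpa using h0

lemma cross_lemma {n r : ℕ} :
    ∀ (σ : List Bool) (j : ℕ) (e e' : Fin r → Fin n),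
      edgeCond e j σ = true → edgeCond e' j (σ.map not) = true → ∃ i, e' i = e i := by
  intro σ
  induction σ with
  | nil =>
    intro j e e' he he'
    simp only [List.map_nil] at he'
    obtain ⟨hj, h0⟩ := (vcond_true_iff e j).mp he
    obtain ⟨hj', h0'⟩ := (vcond_true_iff e' j).mp he'
    exact ⟨⟨j, hj⟩, Fin.ext (by rw [h0']; exact h0.symm)⟩
  | cons b s ih =>
    intro j e e' he he'
    cases b
    · change (vcond e j && edgeCond e (j+1) s) = true at he
      simp only [List.map_cons, Bool.not_false] at he'
      change (vcond e' j || edgeCond e' (j+1) (s.map not)) = true at he'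
      rw [Bool.and_eq_true] at he
      rw [Bool.or_eq_true] at he'
      rcases he' with hv' | hrest'
      · obtain ⟨hj, h0⟩ := (vcond_true_iff e j).mp he.1
        obtain ⟨hj', h0'⟩ := (vcond_true_iff e' j).mp hv'
        exact ⟨⟨j, hj⟩, Fin.ext (by rw [h0']; exact h0.symm)⟩
      · exact ih (j+1) e e' he.2 hrest'
    · change (vcond e j || edgeCond e (j+1) s) = true at he
      simp only [List.map_cons, Bool.not_true] at he'
      change (vcond e' j && edgeCond e' (j+1) (s.map not)) = true at he'
      rw [Bool.or_eq_true] at he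
      rw [Bool.and_eq_true] at he'
      rcases he with hv | hrest
      · obtain ⟨hj, h0⟩ := (vcond_true_iff e j).mp hv
        obtain ⟨hj', h0'⟩ := (vcond_true_iff e' j).mp he'.1
        exact ⟨⟨j, hj⟩, Fin.ext (by rw [h0']; exact h0.symm)⟩
      · exact ih (j+1) e e' hrest he'.2

lemma sigma_exists (n : ℕ) (hn1 : 1 ≤ n) :
    ∀ r, 1 ≤ r → ∀ q, 1 ≤ q → q < 2^r →
      ∃ σ : List Bool, σ.length < r ∧ fval n r σ = Nf n r q ∧
        fval n r (σ.map not) = Nf n r (2^r - q) := by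
  intro r
  induction r with
  | zero => omega
  | succ r ih =>
    intro _ q hq1 hq2
    rcases Nat.eq_zero_or_pos r with rfl | hr
    · -- r+1 = 1, q = 1
      have hq : q = 1 := by norm_num at hq2; omega
      subst hq
      refine ⟨[], by norm_num, ?_, ?_⟩
      · rw [fval_nil n 0 hn1, Nf_one n 1 hn1]
        exact pow_zero n
      · show fval n 1 [] = Nf n 1 (2^1 - 1)
        have h2 : (2^1 - 1 : ℕ) = 1 := rfl
        rw [fval_nil n 0 hn1, h2, Nf_one n 1 hn1, pow_zero]
    · rcases Nat.lt_trichotomy q (2^r) with hlt | heq | hgt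
      · -- q < 2^r : σ = false :: σ'
        obtain ⟨σ', hlen, hf, hflip⟩ := ih hr q hq1 hlt
        refine ⟨false :: σ', by simpa using hlen, ?_, ?_⟩
        · rw [fval_cons_false n r hn1, hf, Nf_low n r q (by omega)]
        · simp only [List.map_cons, Bool.not_false]
          rw [fval_cons_true n r hn1, hflip]
          rw [Nf_high n r (2^(r+1) - q) hn1 (by rw [pow_succ]; omega)]
          have : 2^(r+1) - q - 2^r = 2^r - q := by rw [pow_succ]; omega
          rw [this]
      · -- q = 2^r : σ = []
        subst heq
        refine ⟨[], by simp, ?_, ?_⟩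
        · rw [fval_nil n r hn1, Nf_low n r _ le_rfl, Nf_top n r hn1]
        · have h2 : 2^(r+1) - 2^r = 2^r := by rw [pow_succ]; omega
          rw [h2]
          show fval n (r+1) [] = _
          rw [fval_nil n r hn1, Nf_low n r _ le_rfl, Nf_top n r hn1]
      · -- q > 2^r : σ = true :: σ'
        have hj1 : 1 ≤ q - 2^r := by omega
        have hj2 : q - 2^r < 2^r := by rw [pow_succ] at hq2; omega
        obtain ⟨σ', hlen, hf, hflip⟩ := ih hr (q - 2^r) hj1 hj2
        refine ⟨true :: σ', by simpa using hlen, ?_, ?_⟩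
        · rw [fval_cons_true n r hn1, hf, Nf_high n r q hn1 (by omega)]
        · simp only [List.map_cons, Bool.not_true]
          rw [fval_cons_false n r hn1, hflip]
          have h1 : 2^(r+1) - q ≤ 2^r := by rw [pow_succ]; omega
          rw [Nf_low n r _ h1]
          have h2 : 2^r - (q - 2^r) = 2^(r+1) - q := by rw [pow_succ]; omega
          rw [h2]

/-- `b(t) = N_r(2^r − N*(t))`: among all `F ⊆ [n]^r` with `|F| = t`, the maximal
size of the blocker `B(F)` is `N_r(2^r − q)`, where `q = N*(t)` is the unique
number with `N_r(q−1) < t ≤ N_r(q)`. -/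
theorem stmt9 (n r t q : ℕ) (hn : 2 ≤ n) (hr : 1 ≤ r) (ht1 : 1 ≤ t) (ht2 : t ≤ n ^ r)
    (hq1 : Nseq n r (q - 1) < t) (hq2 : t ≤ Nseq n r q) :
    IsGreatest {m : ℕ | ∃ F : Finset (Fin r → Fin n),
      F.card = t ∧ (blocker n r F).card = m} (Nseq n r (2 ^ r - q)) := by
  have hn1 : (1:ℕ) ≤ n := by omega
  -- pin down q
  have hq2r : q ≤ 2^r := by
    by_contra h
    rw [Nseq_big n r q hn hr (by omega)] at hq2
    omega
  have hq1' : 1 ≤ q := by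
    by_contra h
    have h0 : q = 0 := by omega
    rw [h0, Nseq_eq n r 0 hn hr (Nat.zero_le _), Nf_zero] at hq2
    omega
  have hNq1 : Nf n r (q-1) < t := by
    rw [← Nseq_eq n r (q-1) hn hr (by omega)]
    exact hq1
  have hNq2 : t ≤ Nf n r q := by
    rw [← Nseq_eq n r q hn hr hq2r]
    exact hq2
  rw [Nseq_eq n r (2^r - q) hn hr (by omega)]
  constructor
  · -- membership : there is an F of size t whose blocker has exactly this size
    rcases eq_or_lt_of_le hq2r with hq2r' | hqlt
    · -- q = 2^r : any F of size t works, blocker is empty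
      obtain ⟨F, -, hFcard⟩ := Finset.exists_subset_card_eq
        (s := (Finset.univ : Finset (Fin r → Fin n))) (n := t) (by rw [card_univ_fun]; exact ht2)
      refine ⟨F, hFcard, ?_⟩
      have hub := blocker_card_le n hn r hr F q hq1' hq2r (by rw [hFcard]; exact hNq1)
      have h0 : 2^r - q = 0 := by omega
      rw [h0, Nf_zero] at hub ⊢
      omega
    · -- 1 ≤ q < 2^r
      obtain ⟨σ, hσlen, hσf, hσflip⟩ := sigma_exists n hn1 r hr q hq1' hqlt
      obtain ⟨F, hFsub, hFcard⟩ := Finset.exists_subset_card_eq (s := Fset n r σ) (n := t)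
        (by show t ≤ fval n r σ; rw [hσf]; exact hNq2)
      refine ⟨F, hFcard, ?_⟩
      apply le_antisymm
      · exact blocker_card_le n hn r hr F q hq1' hq2r (by rw [hFcard]; exact hNq1)
      · calc Nf n r (2^r - q) = fval n r (σ.map not) := hσflip.symm
        _ ≤ (blocker n r F).card := by
            apply Finset.card_le_card
            intro e' he'
            rw [mem_blocker_iff]
            intro f hf
            have hfσ : edgeCond f 0 σ = true := by
              have := hFsub hf
              unfold Fset at this
              exact (Finset.mem_filter.mp this).2
            have he'σ : edgeCond e' 0 (σ.map not) = true := by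
              unfold Fset at he'
              exact (Finset.mem_filter.mp he').2
            exact cross_lemma σ 0 f e' hfσ he'σ
  · -- upper bound
    rintro m ⟨F, hFcard, hm⟩
    rw [← hm]
    exact blocker_card_le n hn r hr F q hq1' hq2r (by rw [hFcard]; exact hNq1)
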